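/- Let a < b be real numbers and p ≥ 1 a real number. If f : ℝ → ℝ is nonnegative and monotone increasing on [a,b], differentiable on [a,b], and satisfies f'(x) ≥ p for all x ∈ [a,b], then ∫_a^b f(x)^{p+2} dx − (1/(b−a)^{p−1})·(∫_a^b f(x) dx)^{p+1} ≥ f(a)^{p+1} · ∫_a^b f(x) dx. -/

import Mathlib

open Real Set intervalIntegral

set_option maxHeartbeats 1000000 in
theorem qi_time_scale_real_thm34
    (a b p : ℝ) (hab : a < b) (hp : 1 ≤ p)
    (f f' : ℝ → ℝ)
    (hnonneg : ∀ x ∈ Set.Icc a b, 0 ≤ f x)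
    (hmono : MonotoneOn f (Set.Icc a b))
    (hderiv : ∀ x ∈ Set.Icc a b, HasDerivAt f (f' x) x)
    (hf' : ∀ x ∈ Set.Icc a b, p ≤ f' x) :
    (∫ x in a..b, f x ^ (p + 2)) -
        (1 / (b - a) ^ (p - 1)) * (∫ x in a..b, f x) ^ (p + 1) ≥
      f a ^ (p + 1) * ∫ x in a..b, f x := by
  have hba : (0:ℝ) < b - a := sub_pos.2 hab
  set c : ℝ := (b - a) ^ (p - 1) with hc
  have hcpos : 0 < c := Real.rpow_pos_of_pos hba _
  have hp0 : (0:ℝ) < p := lt_of_lt_of_le one_pos hp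
  have hfc : ContinuousOn f (Icc a b) := fun x hx =>
    (hderiv x hx).continuousAt.continuousWithinAt
  have hfcIoo : ContinuousOn f (Ioo a b) := hfc.mono Ioo_subset_Icc_self
  set g : ℝ → ℝ := fun x => ∫ t in a..x, f t with hgdef
  -- continuity of g
  have hgc : ContinuousOn g (Icc a b) := by
    have := intervalIntegral.continuousOn_primitive_interval
      (f := f) (a := a) (b := b) (μ := MeasureTheory.volume) ?_
    · rwa [uIcc_of_le hab.le] at this
    · rw [uIcc_of_le hab.le]; exact hfc.integrableOn_Icc
  -- g has derivative f x on Ioo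
  have hgderiv : ∀ x ∈ Ioo a b, HasDerivAt g (f x) x := by
    intro x hx
    have hxI : x ∈ Icc a b := Ioo_subset_Icc_self hx
    refine intervalIntegral.integral_hasDerivAt_right ?_ ?_ (hderiv x hxI).continuousAt
    · apply (hfc.mono ?_).intervalIntegrable
      rw [uIcc_of_le hx.1.le]
      exact Icc_subset_Icc le_rfl hxI.2
    · exact hfcIoo.stronglyMeasurableAtFilter isOpen_Ioo x hx
  have hg0 : g a = 0 := intervalIntegral.integral_same
  have hgnonneg : ∀ x ∈ Icc a b, 0 ≤ g x := by
    intro x hx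
    apply intervalIntegral.integral_nonneg hx.1
    intro t ht
    exact hnonneg t ⟨ht.1, ht.2.trans hx.2⟩
  have hgle : ∀ x ∈ Icc a b, g x ≤ (b - a) * f x := by
    intro x hx
    have h1 : g x ≤ (x - a) * f x := by
      have hint : IntervalIntegrable f MeasureTheory.volume a x :=
        (hfc.mono (Icc_subset_Icc le_rfl hx.2)).intervalIntegrable_of_Icc hx.1
      have := intervalIntegral.integral_mono_on (μ := MeasureTheory.volume)
        (f := f) (g := fun _ => f x) hx.1 hint intervalIntegrable_const
        (fun t ht => hmono ⟨ht.1, ht.2.trans hx.2⟩ hx ht.2)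
      simpa [smul_eq_mul] using this
    have h2 : (x - a) * f x ≤ (b - a) * f x :=
      mul_le_mul_of_nonneg_right (by linarith [hx.2]) (hnonneg x hx)
    exact h1.trans h2
  -- auxiliary function h
  set h : ℝ → ℝ := fun x => f x ^ (p + 1) - ((p + 1) / c) * g x ^ p - f a ^ (p + 1)
    with hhdef
  set h' : ℝ → ℝ := fun x => (p + 1) * f x ^ p * f' x -
      ((p + 1) / c) * (p * g x ^ (p - 1) * f x) with hh'def
  have hhd : ∀ x ∈ Ioo a b, HasDerivAt h (h' x) x := by
    intro x hx
    have hxI : x ∈ Icc a b := Ioo_subset_Icc_self hx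
    have d1 : HasDerivAt (fun y => f y ^ (p + 1)) ((p + 1) * f x ^ p * f' x) x := by
      have := (Real.hasStrictDerivAt_rpow_const (x := f x) (p := p + 1)
        (Or.inr (by linarith))).hasDerivAt.comp x (hderiv x hxI)
      simpa [add_sub_cancel_right, mul_assoc, Function.comp_def] using this
    have d2 : HasDerivAt (fun y => g y ^ p) (p * g x ^ (p - 1) * f x) x := by
      have := (Real.hasStrictDerivAt_rpow_const (x := g x) (p := p)
        (Or.inr hp)).hasDerivAt.comp x (hgderiv x hx)
      simpa [mul_assoc, Function.comp_def] using this
    simpa [hhdef, hh'def] using ((d1.sub (d2.const_mul ((p + 1) / c))).sub_const (f a ^ (p + 1)))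
  have hhc : ContinuousOn h (Icc a b) := by
    have hrp : ContinuousOn (fun x => f x ^ (p + 1)) (Icc a b) := by
      intro x hx
      exact (Real.continuousAt_rpow_const _ _ (Or.inr (by linarith))).comp_continuousWithinAt
        (hfc x hx)
    have hrp2 : ContinuousOn (fun x => g x ^ p) (Icc a b) := by
      intro x hx
      exact (Real.continuousAt_rpow_const _ _ (Or.inr hp0.le)).comp_continuousWithinAt
        (hgc x hx)
    exact (hrp.sub (continuousOn_const.mul hrp2)).sub continuousOn_const
  -- h' nonneg on Ioo
  have hh'nonneg : ∀ x ∈ Ioo a b, 0 ≤ h' x := by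
    intro x hx
    have hxI : x ∈ Icc a b := Ioo_subset_Icc_self hx
    have hfx : 0 ≤ f x := hnonneg x hxI
    rcases eq_or_lt_of_le hfx with hfz | hfpos
    · -- f x = 0, then g x = 0
      have hgz : g x = 0 := le_antisymm (by
          have := hgle x hxI; rw [← hfz] at this; simpa using this) (hgnonneg x hxI)
      simp [hh'def, hgz, ← hfz, Real.zero_rpow hp0.ne']
    · have key : g x ^ (p - 1) ≤ c * f x ^ (p - 1) := by
        have h1 : g x ^ (p - 1) ≤ ((b - a) * f x) ^ (p - 1) :=
          Real.rpow_le_rpow (hgnonneg x hxI) (hgle x hxI) (by linarith)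
        rwa [Real.mul_rpow hba.le hfx] at h1
      have hfp : f x ^ (p - 1) * f x = f x ^ p := by
        rw [← Real.rpow_add_one hfpos.ne']
        ring_nf
      have hb1 : ((p + 1) / c) * (p * g x ^ (p - 1) * f x) ≤ (p + 1) * (p * f x ^ p) := by
        have h2 : g x ^ (p - 1) * f x ≤ c * f x ^ p := by
          calc g x ^ (p - 1) * f x ≤ (c * f x ^ (p - 1)) * f x :=
                mul_le_mul_of_nonneg_right key hfx
            _ = c * f x ^ p := by rw [mul_assoc, hfp]
        calc ((p + 1) / c) * (p * g x ^ (p - 1) * f x)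
            = ((p + 1) * p / c) * (g x ^ (p - 1) * f x) := by ring
          _ ≤ ((p + 1) * p / c) * (c * f x ^ p) := by
              apply mul_le_mul_of_nonneg_left h2
              positivity
          _ = (p + 1) * (p * f x ^ p) := by field_simp
      have hb2 : (p + 1) * (p * f x ^ p) ≤ (p + 1) * f x ^ p * f' x := by
        have : p * f x ^ p ≤ f x ^ p * f' x := by
          rw [mul_comm]
          exact mul_le_mul_of_nonneg_left (hf' x hxI) (Real.rpow_nonneg hfx _)
        calc (p + 1) * (p * f x ^ p) ≤ (p + 1) * (f x ^ p * f' x) := by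
              apply mul_le_mul_of_nonneg_left this; linarith
          _ = (p + 1) * f x ^ p * f' x := by ring
      simp only [hh'def]
      linarith
  have hhmono : MonotoneOn h (Icc a b) := by
    apply monotoneOn_of_deriv_nonneg (convex_Icc a b) hhc
    · intro x hx
      rw [interior_Icc] at hx
      exact ((hhd x hx).differentiableAt.differentiableWithinAt)
    · intro x hx
      rw [interior_Icc] at hx
      rw [(hhd x hx).deriv]
      exact hh'nonneg x hx
  have hha : h a = 0 := by
    simp [hhdef, hg0, Real.zero_rpow hp0.ne']
  have hhnonneg : ∀ x ∈ Icc a b, 0 ≤ h x := by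
    intro x hx
    rw [← hha]
    exact hhmono (left_mem_Icc.2 hab.le) hx hx.1
  -- the main function F
  set F : ℝ → ℝ := fun x => (∫ t in a..x, f t ^ (p + 2)) - (1 / c) * g x ^ (p + 1)
      - f a ^ (p + 1) * g x with hFdef
  have hfp2c : ContinuousOn (fun t => f t ^ (p + 2)) (Icc a b) := by
    intro x hx
    exact (Real.continuousAt_rpow_const _ _ (Or.inr (by linarith))).comp_continuousWithinAt
      (hfc x hx)
  have hFc : ContinuousOn F (Icc a b) := by
    have h1 : ContinuousOn (fun x => ∫ t in a..x, f t ^ (p + 2)) (Icc a b) := by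
      have := intervalIntegral.continuousOn_primitive_interval
        (f := fun t => f t ^ (p + 2)) (a := a) (b := b) (μ := MeasureTheory.volume) ?_
      · rwa [uIcc_of_le hab.le] at this
      · rw [uIcc_of_le hab.le]; exact hfp2c.integrableOn_Icc
    have h2 : ContinuousOn (fun x => g x ^ (p + 1)) (Icc a b) := by
      intro x hx
      exact (Real.continuousAt_rpow_const _ _ (Or.inr (by linarith))).comp_continuousWithinAt
        (hgc x hx)
    exact (h1.sub (continuousOn_const.mul h2)).sub (continuousOn_const.mul hgc)
  have hFd : ∀ x ∈ Ioo a b, HasDerivAt F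
      (f x ^ (p + 2) - (1 / c) * ((p + 1) * g x ^ p * f x) - f a ^ (p + 1) * f x) x := by
    intro x hx
    have hxI : x ∈ Icc a b := Ioo_subset_Icc_self hx
    have d1 : HasDerivAt (fun y => ∫ t in a..y, f t ^ (p + 2)) (f x ^ (p + 2)) x := by
      refine intervalIntegral.integral_hasDerivAt_right ?_ ?_ ?_
      · apply ((hfp2c.mono ?_)).intervalIntegrable
        rw [uIcc_of_le hx.1.le]
        exact Icc_subset_Icc le_rfl hxI.2
      · exact (hfp2c.mono Ioo_subset_Icc_self).stronglyMeasurableAtFilter isOpen_Ioo x hx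
      · exact (Real.continuousAt_rpow_const _ _ (Or.inr (by linarith))).comp
          (hderiv x hxI).continuousAt
    have d2 : HasDerivAt (fun y => g y ^ (p + 1)) ((p + 1) * g x ^ p * f x) x := by
      have := (Real.hasStrictDerivAt_rpow_const (x := g x) (p := p + 1)
        (Or.inr (by linarith))).hasDerivAt.comp x (hgderiv x hx)
      simpa [add_sub_cancel_right, mul_assoc, Function.comp_def] using this
    simpa [hFdef, Pi.sub_def] using (d1.sub (d2.const_mul (1 / c))).sub ((hgderiv x hx).const_mul _)
  have hFd_nonneg : ∀ x ∈ Ioo a b, 0 ≤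
      f x ^ (p + 2) - (1 / c) * ((p + 1) * g x ^ p * f x) - f a ^ (p + 1) * f x := by
    intro x hx
    have hxI : x ∈ Icc a b := Ioo_subset_Icc_self hx
    have hfx : 0 ≤ f x := hnonneg x hxI
    rcases eq_or_lt_of_le hfx with hfz | hfpos
    · simp [← hfz, Real.zero_rpow (by positivity : p + 2 ≠ 0)]
    · have hsplit : f x ^ (p + 2) = f x ^ (p + 1) * f x := by
        rw [← Real.rpow_add_one hfpos.ne']
        ring_nf
      have hx0 := hhnonneg x hxI
      have : f x ^ (p + 2) - (1 / c) * ((p + 1) * g x ^ p * f x) - f a ^ (p + 1) * f x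
          = f x * h x := by
        simp only [hhdef, hsplit]
        field_simp
      rw [this]
      exact mul_nonneg hfx hx0
  have hFmono : MonotoneOn F (Icc a b) := by
    apply monotoneOn_of_deriv_nonneg (convex_Icc a b) hFc
    · intro x hx
      rw [interior_Icc] at hx
      exact (hFd x hx).differentiableAt.differentiableWithinAt
    · intro x hx
      rw [interior_Icc] at hx
      rw [(hFd x hx).deriv]
      exact hFd_nonneg x hx
  have hFa : F a = 0 := by
    simp [hFdef, hg0, Real.zero_rpow (by positivity : p + 1 ≠ 0)]
  have hFb : 0 ≤ F b := by
    rw [← hFa]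
    exact hFmono (left_mem_Icc.2 hab.le) (right_mem_Icc.2 hab.le) hab.le
  simp only [hFdef] at hFb
  rw [ge_iff_le]
  linarith
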